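/- Let Γ be a simple connected 3-regular graph of order n, and let μ be the algebraic connectivity of Γ (the second smallest eigenvalue of the Laplacian matrix of Γ). Then the girth of Γ satisfies girth(Γ) ≥ ⌈n(μ−1)/μ⌉. -/

import Mathlib

open Finset SimpleGraph

/-- `μ` is the second smallest (counted with multiplicity) value of the family `e`. -/
def IsSecondSmallest {ι : Type*} (e : ι → ℝ) (μ : ℝ) : Prop :=
  ∃ i₀ i₁ : ι, i₀ ≠ i₁ ∧ e i₀ ≤ μ ∧ e i₁ = μ ∧ ∀ j : ι, j ≠ i₀ → μ ≤ e j

/-- `lam` is the largest value of the family `e`. -/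
def IsLargest {ι : Type*} (e : ι → ℝ) (lam : ℝ) : Prop :=
  (∃ i : ι, e i = lam) ∧ ∀ i : ι, e i ≤ lam

open Matrix

/-- Rayleigh quotient bound for vectors orthogonal to the "constant" eigenvector. -/
lemma aux_rayleigh {V : Type*} [Fintype V] [DecidableEq V]
    {A : Matrix V V ℝ} (hA : A.IsHermitian) {μ : ℝ} (hμ : 0 < μ) (i₀ : V)
    (hge : ∀ j : V, j ≠ i₀ → μ ≤ hA.eigenvalues j)
    (hone : A *ᵥ (fun _ => (1:ℝ)) = 0)
    (x : V → ℝ) (hx : ∑ v, x v = 0) :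
    μ * (x ⬝ᵥ x) ≤ x ⬝ᵥ (A *ᵥ x) := by
  set U : Matrix V V ℝ := (hA.eigenvectorUnitary : Matrix V V ℝ) with hUdef
  have hUmem := (Matrix.IsHermitian.eigenvectorUnitary hA).2
  have hU1 : U * star U = 1 := (Matrix.mem_unitaryGroup_iff).mp hUmem
  have hU2 : star U * U = 1 := (Matrix.mem_unitaryGroup_iff').mp hUmem
  have hspec : A = U * Matrix.diagonal hA.eigenvalues * star U := by
    have h := hA.spectral_theorem
    simpa [RCLike.ofReal_real_eq_id] using h
  have hcvm : ∀ y : V → ℝ, star U *ᵥ y = y ᵥ* U := by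
    intro y
    rw [Matrix.star_eq_conjTranspose, Matrix.conjTranspose_eq_transpose_of_trivial,
      Matrix.mulVec_transpose]
  set c : V → ℝ := star U *ᵥ x with hc
  have h1 : x ⬝ᵥ (A *ᵥ x) = ∑ j, hA.eigenvalues j * (c j * c j) := by
    have hAx : A *ᵥ x = U *ᵥ (Matrix.diagonal hA.eigenvalues *ᵥ (star U *ᵥ x)) := by
      conv_lhs => rw [hspec]
      rw [← Matrix.mulVec_mulVec, ← Matrix.mulVec_mulVec]
    rw [hAx, Matrix.dotProduct_mulVec x U, ← hcvm, ← hc]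
    simp only [dotProduct, Matrix.mulVec_diagonal]
    exact Finset.sum_congr rfl fun j _ => by ring
  have h2 : c ⬝ᵥ c = x ⬝ᵥ x := by
    calc c ⬝ᵥ c = (x ᵥ* U) ⬝ᵥ (star U *ᵥ x) := by rw [hc, hcvm]
    _ = x ⬝ᵥ (U *ᵥ (star U *ᵥ x)) := (Matrix.dotProduct_mulVec x U _).symm
    _ = x ⬝ᵥ ((U * star U) *ᵥ x) := by rw [Matrix.mulVec_mulVec]
    _ = x ⬝ᵥ x := by rw [hU1, Matrix.one_mulVec]
  set d : V → ℝ := star U *ᵥ (fun _ => (1:ℝ)) with hd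
  have hdiag0 : Matrix.diagonal hA.eigenvalues *ᵥ d = 0 := by
    have h0 : U *ᵥ (Matrix.diagonal hA.eigenvalues *ᵥ d) = 0 := by
      rw [hd, Matrix.mulVec_mulVec, Matrix.mulVec_mulVec, ← hspec, hone]
    have h3 := congrArg (fun y => star U *ᵥ y) h0
    simpa [Matrix.mulVec_mulVec, ← Matrix.mul_assoc, hU2, Matrix.one_mulVec] using h3
  have hdj : ∀ j : V, j ≠ i₀ → d j = 0 := by
    intro j hj
    have h4 := congrFun hdiag0 j
    rw [Matrix.mulVec_diagonal] at h4
    have hpos : 0 < hA.eigenvalues j := lt_of_lt_of_le hμ (hge j hj)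
    have := mul_eq_zero.mp h4
    rcases this with h | h
    · exact absurd h (ne_of_gt hpos)
    · exact h
  have hone' : ∀ k : V, U k i₀ * d i₀ = 1 := by
    intro k
    have hUd : U *ᵥ d = fun _ => (1:ℝ) := by
      rw [hd, Matrix.mulVec_mulVec, hU1, Matrix.one_mulVec]
    have h5 := congrFun hUd k
    rw [Matrix.mulVec, dotProduct] at h5
    have h6 : ∑ j, U k j * d j = U k i₀ * d i₀ :=
      Finset.sum_eq_single i₀ (fun j _ hj => by rw [hdj j hj, mul_zero])
        (fun h => absurd (Finset.mem_univ i₀) h)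
    rw [← h6]; exact h5
  have hd0 : d i₀ ≠ 0 := by
    intro h
    have := hone' i₀
    rw [h, mul_zero] at this
    exact zero_ne_one this
  have hci₀ : c i₀ = 0 := by
    have hmul : c i₀ * d i₀ = 0 := by
      have hcfun : c i₀ = ∑ k, U k i₀ * x k := by
        rw [hc, Matrix.mulVec, dotProduct]
        exact Finset.sum_congr rfl fun k _ => by rw [Matrix.star_apply, star_trivial]
      calc c i₀ * d i₀ = ∑ k, (U k i₀ * d i₀) * x k := by
            rw [hcfun, Finset.sum_mul]
            exact Finset.sum_congr rfl fun k _ => by ring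
      _ = ∑ k, x k := Finset.sum_congr rfl fun k _ => by rw [hone' k, one_mul]
      _ = 0 := hx
    exact (mul_eq_zero.mp hmul).resolve_right hd0
  have key : ∀ j : V, μ * (c j * c j) ≤ hA.eigenvalues j * (c j * c j) := by
    intro j
    rcases eq_or_ne j i₀ with rfl | hj
    · rw [hci₀]; simp
    · exact mul_le_mul_of_nonneg_right (hge j hj) (mul_self_nonneg _)
  calc μ * (x ⬝ᵥ x) = μ * (c ⬝ᵥ c) := by rw [h2]
  _ = ∑ j, μ * (c j * c j) := by rw [dotProduct, Finset.mul_sum]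
  _ ≤ ∑ j, hA.eigenvalues j * (c j * c j) := Finset.sum_le_sum fun j _ => key j
  _ = x ⬝ᵥ (A *ᵥ x) := h1.symm

/-- A cycle contributes at least `2 * length` ordered adjacent pairs inside its support. -/
lemma aux_cycle_pairs {V : Type*} [Fintype V] [DecidableEq V] {G : SimpleGraph V}
    [DecidableRel G.Adj] {a : V} {w : G.Walk a a} (hw : w.IsCycle) :
    2 * w.length ≤ ∑ i : V, ∑ j : V,
      (if G.Adj i j ∧ i ∈ w.support.toFinset ∧ j ∈ w.support.toFinset then 1 else 0) := by
  classical
  set S := w.support.toFinset with hS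
  have hedges : w.darts.map SimpleGraph.Dart.edge = w.edges := rfl
  have hnodupE : w.edges.Nodup := hw.isCircuit.isTrail.edges_nodup
  have hnodupD : w.darts.Nodup := List.Nodup.of_map _ (hedges ▸ hnodupE : (w.darts.map SimpleGraph.Dart.edge).Nodup)
  have hkey : ∀ d ∈ w.darts, ∀ e ∈ w.darts, d.edge = e.edge → d = e :=
    List.inj_on_of_nodup_map (hedges ▸ hnodupE)
  set D1 : Finset (V × V) := (w.darts.map SimpleGraph.Dart.toProd).toFinset with hD1
  set D2 : Finset (V × V) := (w.darts.map (fun d => d.symm.toProd)).toFinset with hD2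
  have hD1card : D1.card = w.length := by
    rw [hD1, List.toFinset_card_of_nodup (hnodupD.map (SimpleGraph.Dart.toProd_injective)),
      List.length_map, SimpleGraph.Walk.length_darts]
  have hinj2 : Function.Injective (fun d : G.Dart => d.symm.toProd) :=
    SimpleGraph.Dart.toProd_injective.comp SimpleGraph.Dart.symm_involutive.injective
  have hD2card : D2.card = w.length := by
    rw [hD2, List.toFinset_card_of_nodup (hnodupD.map hinj2),
      List.length_map, SimpleGraph.Walk.length_darts]
  have hdisj : Disjoint D1 D2 := by
    rw [Finset.disjoint_left]
    intro p hp1 hp2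
    rw [hD1, List.mem_toFinset, List.mem_map] at hp1
    rw [hD2, List.mem_toFinset, List.mem_map] at hp2
    obtain ⟨d, hd, rfl⟩ := hp1
    obtain ⟨e, he, hde⟩ := hp2
    have hde' : d = e.symm := SimpleGraph.Dart.toProd_injective hde.symm
    have hedge : d.edge = e.edge := by rw [hde', SimpleGraph.Dart.edge_symm]
    have hdeq : d = e := hkey d hd e he hedge
    exact SimpleGraph.Dart.symm_ne e (hdeq ▸ hde'.symm)
  have hsub : D1 ∪ D2 ⊆ (Finset.univ ×ˢ Finset.univ).filter
      (fun p : V × V => G.Adj p.1 p.2 ∧ p.1 ∈ S ∧ p.2 ∈ S) := by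
    intro p hp
    rcases Finset.mem_union.mp hp with hp | hp
    · rw [hD1, List.mem_toFinset, List.mem_map] at hp
      obtain ⟨d, hd, rfl⟩ := hp
      refine Finset.mem_filter.mpr ⟨by simp, d.adj, ?_, ?_⟩
      · exact List.mem_toFinset.mpr (SimpleGraph.Walk.dart_fst_mem_support_of_mem_darts w hd)
      · exact List.mem_toFinset.mpr (SimpleGraph.Walk.dart_snd_mem_support_of_mem_darts w hd)
    · rw [hD2, List.mem_toFinset, List.mem_map] at hp
      obtain ⟨d, hd, rfl⟩ := hp
      refine Finset.mem_filter.mpr ⟨by simp, d.symm.adj, ?_, ?_⟩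
      · exact List.mem_toFinset.mpr (SimpleGraph.Walk.dart_snd_mem_support_of_mem_darts w hd)
      · exact List.mem_toFinset.mpr (SimpleGraph.Walk.dart_fst_mem_support_of_mem_darts w hd)
  have hcount : ∑ i : V, ∑ j : V, (if G.Adj i j ∧ i ∈ S ∧ j ∈ S then 1 else 0) =
      ((Finset.univ ×ˢ Finset.univ).filter
        (fun p : V × V => G.Adj p.1 p.2 ∧ p.1 ∈ S ∧ p.2 ∈ S)).card := by
    rw [Finset.card_filter, Finset.sum_product]
  rw [hcount]
  calc 2 * w.length = D1.card + D2.card := by rw [hD1card, hD2card]; ring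
  _ = (D1 ∪ D2).card := (Finset.card_union_of_disjoint hdisj).symm
  _ ≤ _ := Finset.card_le_card hsub

/-- In a cubic graph, the number of ordered pairs from cycle support to outside is at most
the cycle length. -/
lemma aux_eout {V : Type*} [Fintype V] [DecidableEq V] {G : SimpleGraph V}
    [DecidableRel G.Adj] (hreg : G.IsRegularOfDegree 3) {a : V} {w : G.Walk a a}
    (hw : w.IsCycle) (hcard : w.support.toFinset.card = w.length) :
    ∑ i : V, ∑ j : V,
        (if G.Adj i j ∧ i ∈ w.support.toFinset ∧ j ∉ w.support.toFinset then 1 else 0)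
      ≤ w.length := by
  classical
  set S := w.support.toFinset with hS
  have hsplit : ∀ i j : V, (if G.Adj i j ∧ i ∈ S ∧ j ∈ S then 1 else 0) +
      (if G.Adj i j ∧ i ∈ S ∧ j ∉ S then 1 else 0) = (if G.Adj i j ∧ i ∈ S then 1 else 0) := by
    intro i j
    by_cases h1 : G.Adj i j <;> by_cases h2 : i ∈ S <;> by_cases h3 : j ∈ S <;>
      simp [h1, h2, h3]
  have htot : ∑ i : V, ∑ j : V, (if G.Adj i j ∧ i ∈ S then 1 else 0) = 3 * w.length := by
    have hrow : ∀ i : V, ∑ j : V, (if G.Adj i j ∧ i ∈ S then 1 else 0)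
        = if i ∈ S then G.degree i else 0 := by
      intro i
      by_cases h : i ∈ S
      · simp only [h, and_true, if_true]
        have := G.degree_eq_sum_if_adj (R := ℕ) i
        simpa using this.symm
      · simp [h]
    rw [Finset.sum_congr rfl (fun i _ => hrow i), Finset.sum_ite_mem, Finset.univ_inter]
    have : ∀ i ∈ S, G.degree i = 3 := fun i _ => hreg i
    rw [Finset.sum_congr rfl this, Finset.sum_const, hcard, smul_eq_mul, Nat.mul_comm]
  have hadd : (∑ i : V, ∑ j : V, (if G.Adj i j ∧ i ∈ S ∧ j ∈ S then 1 else 0)) +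
      (∑ i : V, ∑ j : V, (if G.Adj i j ∧ i ∈ S ∧ j ∉ S then 1 else 0)) = 3 * w.length := by
    rw [← htot, ← Finset.sum_add_distrib]
    refine Finset.sum_congr rfl fun i _ => ?_
    rw [← Finset.sum_add_distrib]
    exact Finset.sum_congr rfl fun j _ => hsplit i j
  have h2L := aux_cycle_pairs hw
  rw [← hS] at h2L
  omega

/-- The support of a cycle, as a finset, has cardinality equal to the cycle's length. -/
lemma aux_card_support {V : Type*} [DecidableEq V] {G : SimpleGraph V} {a : V}
    {w : G.Walk a a} (hw : w.IsCycle) : w.support.toFinset.card = w.length := by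
  have hlen : w.support.tail.length = w.length := by
    rw [List.length_tail, SimpleGraph.Walk.length_support]
    omega
  have hne : w.support.tail ≠ [] := by
    intro h
    rw [h] at hlen
    have := hw.three_le_length
    simp at hlen
    omega
  have hmem : a ∈ w.support.tail := by
    have h1 : w.support.tail.getLast hne = a := by
      rw [List.getLast_tail]
      exact SimpleGraph.Walk.getLast_support w
    have h2 := List.getLast_mem hne
    rwa [h1] at h2
  have hcons : w.support = a :: w.support.tail := w.support_eq_cons
  have hfin : w.support.toFinset = w.support.tail.toFinset := by
    rw [hcons]
    simp only [List.toFinset_cons]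
    exact Finset.insert_eq_self.mpr (List.mem_toFinset.mpr hmem)
  rw [hfin, List.toFinset_card_of_nodup hw.support_nodup, hlen]

theorem stmt_7 {V : Type*} [Fintype V] [DecidableEq V]
    (G : SimpleGraph V) [DecidableRel G.Adj]
    (n : ℕ) (hn : Fintype.card V = n)
    (hconn : G.Connected)
    (hreg : G.IsRegularOfDegree 3)
    (mu : ℝ) (hmu : ∃ hL : (G.lapMatrix ℝ).IsHermitian, IsSecondSmallest hL.eigenvalues mu)
    :
    ((⌈(n : ℝ) * (mu - 1) / mu⌉.toNat : ℕ∞) ≤ G.egirth) := by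
  obtain ⟨hL, i₀, i₁, hne01, h0le, h1eq, hgeall⟩ := hmu
  have hpsd : (G.lapMatrix ℝ).PosSemidef := SimpleGraph.posSemidef_lapMatrix ℝ G
  rcases lt_trichotomy mu 0 with hneg | hzero | hpos
  · exfalso
    have h : (0:ℝ) ≤ hL.eigenvalues i₁ := hpsd.eigenvalues_nonneg i₁
    rw [h1eq] at h
    exact absurd h (not_le.mpr hneg)
  · subst hzero
    simp
  · have hne : Nonempty V := hconn.nonempty
    have hnpos : 0 < n := hn ▸ Fintype.card_pos
    have hac : ¬ G.IsAcyclic := by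
      intro hac
      have htree : G.IsTree := ⟨hconn, hac⟩
      have h1 := htree.card_edgeFinset
      have h2 := G.sum_degrees_eq_twice_card_edges
      have h3 : ∑ v : V, G.degree v = 3 * Fintype.card V := by
        rw [Finset.sum_congr rfl (fun v _ => hreg v), Finset.sum_const, Finset.card_univ,
          smul_eq_mul, Nat.mul_comm]
      omega
    obtain ⟨a, w, hwc, hgirth⟩ := SimpleGraph.exists_egirth_eq_length.mpr hac
    set S := w.support.toFinset with hSdef
    have hScard : S.card = w.length := aux_card_support hwc
    have hLle : w.length ≤ n := by
      rw [← hScard, ← hn, ← Finset.card_univ]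
      exact Finset.card_le_univ S
    have hL3 : 3 ≤ w.length := hwc.three_le_length
    set N : ℝ := (n : ℝ) with hNdef
    set l : ℝ := (w.length : ℝ) with hldef
    have hN0 : (0:ℝ) < N := by rw [hNdef]; exact_mod_cast hnpos
    have hl0 : (0:ℝ) < l := by rw [hldef]; exact_mod_cast (by omega : 0 < w.length)
    have hlN : l ≤ N := by rw [hldef, hNdef]; exact_mod_cast hLle
    set x : V → ℝ := fun v => if v ∈ S then N - l else -l with hxdef
    have hsum : ∑ v, x v = 0 := by
      have hxv : ∀ v, x v = (if v ∈ S then N else 0) - l := by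
        intro v; by_cases h : v ∈ S <;> simp [hxdef, h]
      rw [Finset.sum_congr rfl fun v _ => hxv v, Finset.sum_sub_distrib, Finset.sum_ite_mem,
        Finset.univ_inter, Finset.sum_const, Finset.sum_const, Finset.card_univ, hn, hScard,
        nsmul_eq_mul, nsmul_eq_mul, ← hldef, ← hNdef]
      ring
    have hray := aux_rayleigh hL hpos i₀ (fun j hj => hgeall j hj)
      (G.lapMatrix_mulVec_const_eq_zero) x hsum
    have hxv2 : ∀ v, x v * x v = (if v ∈ S then (N-l)*(N-l) - l*l else 0) + l*l := by
      intro v; by_cases h : v ∈ S <;> simp [hxdef, h] <;> ring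
    have hxx : x ⬝ᵥ x = l * (N - l) * N := by
      rw [dotProduct, Finset.sum_congr rfl fun v _ => hxv2 v, Finset.sum_add_distrib,
        Finset.sum_ite_mem, Finset.univ_inter, Finset.sum_const, Finset.sum_const,
        Finset.card_univ, hn, hScard, nsmul_eq_mul, nsmul_eq_mul, ← hldef, ← hNdef]
      ring
    have hquad : x ⬝ᵥ ((G.lapMatrix ℝ) *ᵥ x) =
        (∑ i : V, ∑ j : V, if G.Adj i j then (x i - x j)^2 else 0)/2 := by
      rw [← Matrix.toLinearMap₂'_apply', SimpleGraph.lapMatrix_toLinearMap₂']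
    set cnt1 : ℕ := ∑ i : V, ∑ j : V, (if G.Adj i j ∧ i ∈ S ∧ j ∉ S then 1 else 0) with hcnt1
    set cnt2 : ℕ := ∑ i : V, ∑ j : V, (if G.Adj i j ∧ i ∉ S ∧ j ∈ S then 1 else 0) with hcnt2
    have hterm : ∀ i j : V, (if G.Adj i j then (x i - x j)^2 else 0) =
        N^2 * ((if G.Adj i j ∧ i ∈ S ∧ j ∉ S then (1:ℝ) else 0) +
          (if G.Adj i j ∧ i ∉ S ∧ j ∈ S then (1:ℝ) else 0)) := by
      intro i j
      by_cases h1 : G.Adj i j <;> by_cases h2 : i ∈ S <;> by_cases h3 : j ∈ S <;>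
        simp [hxdef, h1, h2, h3] <;> ring
    have hcast1 : ((cnt1 : ℝ)) = ∑ i : V, ∑ j : V,
        (if G.Adj i j ∧ i ∈ S ∧ j ∉ S then (1:ℝ) else 0) := by
      rw [hcnt1]; push_cast; rfl
    have hcast2 : ((cnt2 : ℝ)) = ∑ i : V, ∑ j : V,
        (if G.Adj i j ∧ i ∉ S ∧ j ∈ S then (1:ℝ) else 0) := by
      rw [hcnt2]; push_cast; rfl
    have hswap : cnt2 = cnt1 := by
      rw [hcnt1, hcnt2, Finset.sum_comm]
      refine Finset.sum_congr rfl fun i _ => Finset.sum_congr rfl fun j _ => ?_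
      refine if_congr ?_ rfl rfl
      constructor
      · rintro ⟨h, h', h''⟩; exact ⟨h.symm, h'', h'⟩
      · rintro ⟨h, h', h''⟩; exact ⟨h.symm, h'', h'⟩
    have hcnt1L : cnt1 ≤ w.length := by
      rw [hcnt1, hSdef]
      exact aux_eout hreg hwc (hSdef ▸ hScard)
    have hub : x ⬝ᵥ ((G.lapMatrix ℝ) *ᵥ x) ≤ l * N^2 := by
      rw [hquad]
      have hsum2 : ∑ i : V, ∑ j : V, (if G.Adj i j then (x i - x j)^2 else 0) =
          N^2 * ((cnt1:ℝ) + (cnt2:ℝ)) := by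
        rw [Finset.sum_congr rfl fun i _ => Finset.sum_congr rfl fun j _ => hterm i j,
          hcast1, hcast2]
        simp only [mul_add, Finset.mul_sum, Finset.sum_add_distrib]
      rw [hsum2, hswap]
      have hc1l : ((cnt1:ℝ)) ≤ l := by rw [hldef]; exact_mod_cast hcnt1L
      nlinarith [sq_nonneg N]
    have hmain : mu * (N - l) ≤ N := by
      have h1 : mu * (l * (N - l) * N) ≤ l * N^2 := by
        rw [← hxx]; exact le_trans hray hub
      have e1 : (mu * (N - l)) * (l * N) = mu * (l * (N - l) * N) := by ring
      have e2 : N * (l * N) = l * N^2 := by ring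
      have h2 : (mu * (N - l)) * (l * N) ≤ N * (l * N) := by rw [e1, e2]; exact h1
      exact le_of_mul_le_mul_right h2 (mul_pos hl0 hN0)
    have hceil : (⌈N * (mu - 1) / mu⌉ : ℤ) ≤ (w.length : ℤ) := by
      rw [Int.ceil_le, div_le_iff₀ hpos]
      push_cast
      rw [← hldef]
      nlinarith [hmain]
    rw [hgirth]
    have hfin : (⌈N * (mu - 1) / mu⌉.toNat) ≤ w.length := by
      rw [Int.toNat_le]
      exact hceil
    exact_mod_cast hfin
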